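/- Let {B₁, …, B_K} be a partition of {1, …, n} into consecutive blocks Bₖ = {pₖ, …, qₖ} with q_{k} + 1 = p_{k+1}, and define θ ∈ ℝⁿ by θᵢ = Av(Bₖ) for i ∈ Bₖ, where Av(B) = (Σ_{i∈B} ωᵢ yᵢ)/(Σ_{i∈B} ωᵢ). If (a) Av(B₁) ≤ Av(B₂) ≤ … ≤ Av(B_K) and (b) for every block Bₖ = {pₖ, …, qₖ} and every i with pₖ ≤ i ≤ qₖ one has Σ_{j=pₖ}^{i} ωⱼ(yⱼ − Av(Bₖ)) ≥ 0, then θ is the optimal solution of the isotonic regression problem. In particular, the PAV algorithm, which terminates with a partition satisfying (a) and (b), returns the optimal solution. -/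

import Mathlib

/-- The weighted least-squares objective of the isotonic regression problem. -/
noncomputable def irObj (n : ℕ) (ω y θ : Fin n → ℝ) : ℝ :=
  (1/2) * ∑ i, ω i * (y i - θ i)^2

/-- Abel-type summation bound: if all leading partial sums of `g` starting at `p` are
nonnegative and `T` is monotone, the weighted sum is bounded by the full sum times the last
value of `T`. -/
lemma pav_abel {n : ℕ} (g T : Fin n → ℝ) (hT : Monotone T) (p : ℕ) :
    ∀ M : ℕ, ∀ hM : M < n, p ≤ M →
    (∀ m : ℕ, p ≤ m → m ≤ M →
      0 ≤ ∑ j ∈ Finset.univ.filter (fun j : Fin n => p ≤ (j : ℕ) ∧ (j : ℕ) ≤ m), g j) →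
    ∑ j ∈ Finset.univ.filter (fun j : Fin n => p ≤ (j : ℕ) ∧ (j : ℕ) ≤ M), g j * T j
      ≤ (∑ j ∈ Finset.univ.filter (fun j : Fin n => p ≤ (j : ℕ) ∧ (j : ℕ) ≤ M), g j)
          * T ⟨M, hM⟩ := by
  intro M
  induction M with
  | zero =>
    intro hM hpM _
    have hp0 : p = 0 := Nat.le_zero.mp hpM
    have hfe : Finset.univ.filter (fun j : Fin n => p ≤ (j : ℕ) ∧ (j : ℕ) ≤ 0)
        = {(⟨0, hM⟩ : Fin n)} := by
      ext j; simp [Fin.ext_iff]; omega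
    rw [hfe]; simp
  | succ M ih =>
    intro hM hpM hS
    by_cases hpM' : p ≤ M
    · have hM' : M < n := by omega
      have hins : Finset.univ.filter (fun j : Fin n => p ≤ (j : ℕ) ∧ (j : ℕ) ≤ M + 1)
          = insert (⟨M+1, hM⟩ : Fin n)
              (Finset.univ.filter (fun j : Fin n => p ≤ (j : ℕ) ∧ (j : ℕ) ≤ M)) := by
        ext j; simp [Fin.ext_iff]; omega
      have hnot : (⟨M+1, hM⟩ : Fin n) ∉
          Finset.univ.filter (fun j : Fin n => p ≤ (j : ℕ) ∧ (j : ℕ) ≤ M) := by simp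
      rw [hins, Finset.sum_insert hnot, Finset.sum_insert hnot]
      have h1 := ih hM' hpM' (fun m hm hmM => hS m hm (by omega))
      have h2 : T ⟨M, hM'⟩ ≤ T ⟨M+1, hM⟩ := hT (by simp [Fin.le_def])
      have h3 : 0 ≤ ∑ j ∈ Finset.univ.filter (fun j : Fin n => p ≤ (j : ℕ) ∧ (j : ℕ) ≤ M), g j :=
        hS M hpM' (by omega)
      nlinarith [mul_le_mul_of_nonneg_left h2 h3]
    · have hfe : Finset.univ.filter (fun j : Fin n => p ≤ (j : ℕ) ∧ (j : ℕ) ≤ M + 1)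
        = {(⟨M+1, hM⟩ : Fin n)} := by
        ext j; simp [Fin.ext_iff]; omega
      rw [hfe]; simp

/-- If a partition of `{0,…,n-1}` into consecutive blocks (with boundaries `b 0 = 0 < b 1 < … <
b K = n`, block `k` being `{i : b k ≤ i < b (k+1)}`) satisfies (a) the weighted block averages
are nondecreasing and (b) within each block all leading partial sums of `ωⱼ(yⱼ - Av)` are
nonnegative, then the vector `θ` that is constant equal to the block average on each block is
the optimal solution of the isotonic regression problem.  (The PAV algorithm terminates with
such a partition, hence returns the optimal solution.) -/
theorem pav_partition_optimal
    (n : ℕ) (hn : 1 ≤ n) (y ω : Fin n → ℝ) (hω : ∀ i, 0 < ω i)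
    (K : ℕ) (b : Fin (K+1) → ℕ) (hb : StrictMono b)
    (hb0 : b 0 = 0) (hbK : b (Fin.last K) = n)
    (Av : Fin K → ℝ)
    (hAv : ∀ k : Fin K,
      Av k = (∑ i ∈ Finset.univ.filter
                (fun i : Fin n => b k.castSucc ≤ (i : ℕ) ∧ (i : ℕ) < b k.succ), ω i * y i) /
             (∑ i ∈ Finset.univ.filter
                (fun i : Fin n => b k.castSucc ≤ (i : ℕ) ∧ (i : ℕ) < b k.succ), ω i))
    (θ : Fin n → ℝ)
    (hθ : ∀ k : Fin K, ∀ i : Fin n, b k.castSucc ≤ (i : ℕ) → (i : ℕ) < b k.succ → θ i = Av k)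
    (ha : Monotone Av)
    (hbnd : ∀ k : Fin K, ∀ m : Fin n, b k.castSucc ≤ (m : ℕ) → (m : ℕ) < b k.succ →
      0 ≤ ∑ j ∈ Finset.univ.filter
            (fun j : Fin n => b k.castSucc ≤ (j : ℕ) ∧ (j : ℕ) ≤ (m : ℕ)),
          ω j * (y j - Av k)) :
    Monotone θ ∧ ∀ θ' : Fin n → ℝ, Monotone θ' → irObj n ω y θ ≤ irObj n ω y θ' := by
  classical
  have hK : 0 < K := by
    rcases Nat.eq_zero_or_pos K with h | h
    · subst h
      have : (0 : Fin 1) = Fin.last 0 := rfl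
      rw [this, hbK] at hb0; omega
    · exact h
  have hbub : ∀ k : Fin K, b k.succ ≤ n := fun k => by
    rw [← hbK]; exact hb.monotone (Fin.le_last _)
  have hblt : ∀ k : Fin K, b k.castSucc < b k.succ := fun k => hb (Fin.castSucc_lt_succ : k.castSucc < k.succ)
  -- every index lies in some block
  have hex : ∀ i : Fin n, ∃ k : Fin K, b k.castSucc ≤ (i : ℕ) ∧ (i : ℕ) < b k.succ := by
    intro i
    set S := Finset.univ.filter (fun k : Fin K => b k.castSucc ≤ (i : ℕ)) with hSdef
    have h0S : (⟨0, hK⟩ : Fin K) ∈ S := by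
      simp only [hSdef, Finset.mem_filter, Finset.mem_univ, true_and]
      have h00 : (Fin.castSucc (⟨0, hK⟩ : Fin K)) = 0 := by ext; simp
      rw [h00, hb0]; omega
    have hSne : S.Nonempty := ⟨_, h0S⟩
    refine ⟨S.max' hSne, ?_, ?_⟩
    · have := S.max'_mem hSne
      simpa [hSdef] using this
    · by_contra h
      push_neg at h
      set k := S.max' hSne with hk
      by_cases hlast : (k : ℕ) + 1 = K
      · have hsl : k.succ = Fin.last K := by ext; simpa using hlast
        rw [hsl, hbK] at h
        omega
      · have hk1 : (k : ℕ) + 1 < K := lt_of_le_of_ne k.isLt hlast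
        set k' : Fin K := ⟨(k : ℕ) + 1, hk1⟩ with hk'
        have hck : k'.castSucc = k.succ := by ext; simp [hk']
        have hk'S : k' ∈ S := by
          simp only [hSdef, Finset.mem_filter, Finset.mem_univ, true_and]
          rw [hck]; exact h
        have hle := S.le_max' k' hk'S
        have : (k' : ℕ) ≤ (k : ℕ) := hle
        simp [hk'] at this
  choose blk hblk1 hblk2 using hex
  -- uniqueness of the block
  have huniq : ∀ (i : Fin n) (k : Fin K), b k.castSucc ≤ (i : ℕ) → (i : ℕ) < b k.succ →
      blk i = k := by
    intro i k h1 h2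
    by_contra hne
    rcases lt_or_gt_of_ne hne with hlt | hlt
    · have hlt' : ((blk i : ℕ) : ℕ) < (k : ℕ) := hlt
      have : b (blk i).succ ≤ b k.castSucc := hb.monotone (by
        rw [Fin.le_def]; simp only [Fin.val_succ, Fin.coe_castSucc]; omega)
      have := hblk2 i
      omega
    · have hlt' : (k : ℕ) < (blk i : ℕ) := hlt
      have : b k.succ ≤ b (blk i).castSucc := hb.monotone (by
        rw [Fin.le_def]; simp only [Fin.val_succ, Fin.coe_castSucc]; omega)
      have := hblk1 i
      omega
  have hθval : ∀ i : Fin n, θ i = Av (blk i) := fun i => hθ (blk i) i (hblk1 i) (hblk2 i)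
  -- monotonicity of blk, hence of θ
  have hblkmono : ∀ i j : Fin n, i ≤ j → blk i ≤ blk j := by
    intro i j hij
    by_contra h
    push_neg at h
    have h' : (blk j : ℕ) < (blk i : ℕ) := h
    have h1 : b (blk j).succ ≤ b (blk i).castSucc := hb.monotone (by
      rw [Fin.le_def]; simp only [Fin.val_succ, Fin.coe_castSucc]; omega)
    have h2 := hblk1 i
    have h3 := hblk2 j
    have h4 : (i : ℕ) ≤ (j : ℕ) := hij
    omega
  have hθmono : Monotone θ := by
    intro i j hij
    rw [hθval i, hθval j]
    exact ha (hblkmono i j hij)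
  refine ⟨hθmono, ?_⟩
  intro θ' hθ'
  -- block finsets
  set Bk : Fin K → Finset (Fin n) := fun k => Finset.univ.filter
    (fun i : Fin n => b k.castSucc ≤ (i : ℕ) ∧ (i : ℕ) < b k.succ) with hBkdef
  have hBk_eq : ∀ k : Fin K, Bk k = Finset.univ.filter (fun i : Fin n => blk i = k) := by
    intro k
    ext i
    simp only [hBkdef, Finset.mem_filter, Finset.mem_univ, true_and]
    constructor
    · rintro ⟨h1, h2⟩; exact huniq i k h1 h2
    · rintro rfl; exact ⟨hblk1 i, hblk2 i⟩
  have hsplit : ∀ F : Fin n → ℝ, ∑ i, F i = ∑ k : Fin K, ∑ i ∈ Bk k, F i := by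
    intro F
    have hc : ∑ k : Fin K, ∑ i ∈ Bk k, F i
        = ∑ k : Fin K, ∑ i ∈ Finset.univ.filter (fun i : Fin n => blk i = k), F i :=
      Finset.sum_congr rfl (fun k _ => by rw [hBk_eq k])
    rw [hc]
    exact (Finset.sum_fiberwise Finset.univ blk F).symm
  -- block weight positivity and zero-sum property
  have hmem0 : ∀ k : Fin K, (⟨b k.castSucc, lt_of_lt_of_le (hblt k) (hbub k)⟩ : Fin n) ∈ Bk k := by
    intro k
    simp only [hBkdef, Finset.mem_filter, Finset.mem_univ, true_and]
    exact ⟨le_refl _, hblt k⟩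
  have hωpos : ∀ k : Fin K, 0 < ∑ i ∈ Bk k, ω i := by
    intro k
    exact Finset.sum_pos (fun i _ => hω i) ⟨_, hmem0 k⟩
  have hg0 : ∀ k : Fin K, ∑ i ∈ Bk k, ω i * (y i - Av k) = 0 := by
    intro k
    have hne : (∑ i ∈ Bk k, ω i) ≠ 0 := ne_of_gt (hωpos k)
    have h1 : ∑ i ∈ Bk k, ω i * (y i - Av k)
        = (∑ i ∈ Bk k, ω i * y i) - Av k * ∑ i ∈ Bk k, ω i := by
      rw [Finset.mul_sum, ← Finset.sum_sub_distrib]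
      exact Finset.sum_congr rfl (fun i _ => by ring)
    rw [h1, hAv k]
    have : (∑ i ∈ Finset.univ.filter
        (fun i : Fin n => b k.castSucc ≤ (i : ℕ) ∧ (i : ℕ) < b k.succ), ω i * y i)
        = ∑ i ∈ Bk k, ω i * y i := rfl
    rw [this]
    have : (∑ i ∈ Finset.univ.filter
        (fun i : Fin n => b k.castSucc ≤ (i : ℕ) ∧ (i : ℕ) < b k.succ), ω i)
        = ∑ i ∈ Bk k, ω i := rfl
    rw [this]
    field_simp
    simp
  -- rewrite the block as an `≤`-filter
  have hBk_le : ∀ k : Fin K, Bk k = Finset.univ.filter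
      (fun i : Fin n => b k.castSucc ≤ (i : ℕ) ∧ (i : ℕ) ≤ b k.succ - 1) := by
    intro k
    have := hblt k
    ext i
    simp only [hBkdef, Finset.mem_filter, Finset.mem_univ, true_and]
    omega
  -- key block inequality for θ'
  have hblock : ∀ k : Fin K, ∑ i ∈ Bk k, (ω i * (y i - Av k)) * θ' i ≤ 0 := by
    intro k
    have hq1 : b k.succ - 1 < n := by have := hblt k; have := hbub k; omega
    have hq2 : b k.castSucc ≤ b k.succ - 1 := by have := hblt k; omega
    have hS : ∀ m : ℕ, b k.castSucc ≤ m → m ≤ b k.succ - 1 →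
        0 ≤ ∑ j ∈ Finset.univ.filter
            (fun j : Fin n => b k.castSucc ≤ (j : ℕ) ∧ (j : ℕ) ≤ m),
          ω j * (y j - Av k) := by
      intro m hm1 hm2
      have hmn : m < n := by omega
      have hmq : m < b k.succ := by have := hblt k; omega
      exact hbnd k ⟨m, hmn⟩ hm1 hmq
    have key := pav_abel (fun j => ω j * (y j - Av k)) θ' hθ' (b k.castSucc)
      (b k.succ - 1) hq1 hq2 hS
    rw [hBk_le k]
    calc ∑ i ∈ Finset.univ.filter
          (fun i : Fin n => b k.castSucc ≤ (i : ℕ) ∧ (i : ℕ) ≤ b k.succ - 1),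
          (ω i * (y i - Av k)) * θ' i
        ≤ (∑ j ∈ Finset.univ.filter
          (fun j : Fin n => b k.castSucc ≤ (j : ℕ) ∧ (j : ℕ) ≤ b k.succ - 1),
          ω j * (y j - Av k)) * θ' ⟨b k.succ - 1, hq1⟩ := key
      _ = 0 := by
          rw [← hBk_le k, hg0 k, zero_mul]
  -- global sums
  set g : Fin n → ℝ := fun i => ω i * (y i - θ i) with hgdef
  have hgb : ∀ k : Fin K, ∀ i ∈ Bk k, g i = ω i * (y i - Av k) := by
    intro k i hi
    simp only [hBkdef, Finset.mem_filter, Finset.mem_univ, true_and] at hi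
    simp only [hgdef, hθ k i hi.1 hi.2]
  have h1 : ∑ i, g i * θ i = 0 := by
    rw [hsplit (fun i => g i * θ i)]
    apply Finset.sum_eq_zero
    intro k _
    have : ∑ i ∈ Bk k, g i * θ i = Av k * ∑ i ∈ Bk k, ω i * (y i - Av k) := by
      rw [Finset.mul_sum]
      apply Finset.sum_congr rfl
      intro i hi
      have hi' := hi
      simp only [hBkdef, Finset.mem_filter, Finset.mem_univ, true_and] at hi'
      rw [hgb k i hi, hθ k i hi'.1 hi'.2]; ring
    rw [this, hg0 k, mul_zero]
  have h2 : ∑ i, g i * θ' i ≤ 0 := by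
    rw [hsplit (fun i => g i * θ' i)]
    apply Finset.sum_nonpos
    intro k _
    calc ∑ i ∈ Bk k, g i * θ' i
        = ∑ i ∈ Bk k, (ω i * (y i - Av k)) * θ' i :=
          Finset.sum_congr rfl (fun i hi => by rw [hgb k i hi])
      _ ≤ 0 := hblock k
  have h3 : 0 ≤ ∑ i, ω i * (θ i - θ' i)^2 :=
    Finset.sum_nonneg (fun i _ => mul_nonneg (le_of_lt (hω i)) (sq_nonneg _))
  have h4 : ∑ i, g i * (θ i - θ' i) = (∑ i, g i * θ i) - ∑ i, g i * θ' i := by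
    rw [← Finset.sum_sub_distrib]
    exact Finset.sum_congr rfl (fun i _ => by ring)
  have hkey : irObj n ω y θ' - irObj n ω y θ
      = (∑ i, g i * (θ i - θ' i)) + (1/2) * ∑ i, ω i * (θ i - θ' i)^2 := by
    unfold irObj
    rw [Finset.mul_sum, Finset.mul_sum, Finset.mul_sum, ← Finset.sum_sub_distrib,
      ← Finset.sum_add_distrib]
    exact Finset.sum_congr rfl (fun i _ => by simp only [hgdef]; ring)
  linarith
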